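/- Let n ≥ 1 and let B, A₁, A₂ be symmetric real n×n matrices with B positive definite and A₁, A₂ positive semidefinite. Set A = A₁ + A₂, let τ > 0 and σ ≥ 1/2. If vectors y, y', φ ∈ ℝⁿ satisfy the factorized regionally additive scheme (B + στA₁) B⁻¹ (B + στA₂) ((y' − y)/τ) + A y = φ, then ‖(B + στA₂) y'‖_{B⁻¹} ≤ ‖(B + στA₂) y‖_{B⁻¹} + τ ‖φ‖_{B⁻¹}. -/

import Mathlib

open Matrix

/-- The `B⁻¹`-weighted norm `‖x‖_{B⁻¹} = √(xᵀ B⁻¹ x)`. -/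
noncomputable def normBinv {n : ℕ} (B : Matrix (Fin n) (Fin n) ℝ) (x : Fin n → ℝ) : ℝ :=
  Real.sqrt (x ⬝ᵥ B⁻¹ *ᵥ x)

namespace FactorizedAux

variable {n : ℕ}

lemma herm_dot {S : Matrix (Fin n) (Fin n) ℝ} (hS : S.IsHermitian) (x w : Fin n → ℝ) :
    x ⬝ᵥ (S *ᵥ w) = (S *ᵥ x) ⬝ᵥ w := by
  rw [dotProduct_mulVec, ← mulVec_transpose,
    show Sᵀ = S from by simpa [conjTranspose_eq_transpose_of_trivial] using hS.eq]

lemma symm_dot {S : Matrix (Fin n) (Fin n) ℝ} (hS : S.IsHermitian) (x w : Fin n → ℝ) :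
    x ⬝ᵥ (S *ᵥ w) = w ⬝ᵥ (S *ᵥ x) := by
  rw [herm_dot hS, dotProduct_comm]

lemma quad_nonneg {M : Matrix (Fin n) (Fin n) ℝ} (hM : M.PosSemidef) (x : Fin n → ℝ) :
    0 ≤ x ⬝ᵥ (M *ᵥ x) := by simpa using hM.dotProduct_mulVec_nonneg x

lemma normBinv_mono (B : Matrix (Fin n) (Fin n) ℝ) {x y : Fin n → ℝ}
    (h : x ⬝ᵥ B⁻¹ *ᵥ x ≤ y ⬝ᵥ B⁻¹ *ᵥ y) : normBinv B x ≤ normBinv B y :=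
  Real.sqrt_le_sqrt h

lemma normBinv_smul (B : Matrix (Fin n) (Fin n) ℝ) {c : ℝ} (hc : 0 ≤ c) (x : Fin n → ℝ) :
    normBinv B (c • x) = c * normBinv B x := by
  unfold normBinv
  rw [mulVec_smul, dotProduct_smul, smul_dotProduct, smul_eq_mul, smul_eq_mul, ← mul_assoc,
    Real.sqrt_mul (mul_nonneg hc hc), Real.sqrt_mul_self hc]

lemma sqrt_dot_triangle (a b : Fin n → ℝ) :
    Real.sqrt ((a + b) ⬝ᵥ (a + b)) ≤ Real.sqrt (a ⬝ᵥ a) + Real.sqrt (b ⬝ᵥ b) := by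
  have h : ∀ v : Fin n → ℝ, Real.sqrt (v ⬝ᵥ v) = ‖(WithLp.equiv 2 (Fin n → ℝ)).symm v‖ := by
    intro v
    rw [EuclideanSpace.norm_eq]
    congr 1
    simp [dotProduct, sq, Real.norm_eq_abs, abs_mul_abs_self]
  rw [h, h, h]
  simpa using norm_add_le ((WithLp.equiv 2 (Fin n → ℝ)).symm a) ((WithLp.equiv 2 (Fin n → ℝ)).symm b)

open scoped MatrixOrder in
lemma normBinv_add_le {B : Matrix (Fin n) (Fin n) ℝ} (hB : B.PosDef) (a b : Fin n → ℝ) :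
    normBinv B (a + b) ≤ normBinv B a + normBinv B b := by
  have hG : (B⁻¹).PosSemidef := hB.inv.posSemidef
  set S := CFC.sqrt (B⁻¹) with hSdef
  have hSS : S * S = B⁻¹ := CFC.sqrt_mul_sqrt_self _ hG.nonneg
  have hq : ∀ v : Fin n → ℝ, v ⬝ᵥ B⁻¹ *ᵥ v = (S *ᵥ v) ⬝ᵥ (S *ᵥ v) := by
    intro v
    rw [← hSS, ← mulVec_mulVec, herm_dot (nonneg_iff_posSemidef.mp (CFC.sqrt_nonneg _)).isHermitian]
  unfold normBinv
  rw [hq, hq, hq, mulVec_add]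
  exact sqrt_dot_triangle _ _

end FactorizedAux

open FactorizedAux in
theorem factorized_scheme_one_step_stability
    {n : ℕ} (hn : 1 ≤ n)
    (B A₁ A₂ : Matrix (Fin n) (Fin n) ℝ)
    (hB : B.PosDef) (hA₁ : A₁.PosSemidef) (hA₂ : A₂.PosSemidef)
    (A : Matrix (Fin n) (Fin n) ℝ) (hA : A = A₁ + A₂)
    (τ σ : ℝ) (hτ : 0 < τ) (hσ : 1 / 2 ≤ σ)
    (y y' φ : Fin n → ℝ)
    (hscheme : ((B + (σ * τ) • A₁) * B⁻¹ * (B + (σ * τ) • A₂)) *ᵥ ((1 / τ) • (y' - y))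
        + A *ᵥ y = φ) :
    normBinv B ((B + (σ * τ) • A₂) *ᵥ y')
      ≤ normBinv B ((B + (σ * τ) • A₂) *ᵥ y) + τ * normBinv B φ := by
  subst hA
  have hστ : 0 < σ * τ := mul_pos (lt_of_lt_of_le (by norm_num) hσ) hτ
  set c := σ * τ with hc
  set D := B + c • A₁ with hDdef
  set C := B + c • A₂ with hCdef
  -- positivity facts
  have hA₁t : A₁ᵀ = A₁ := by
    simpa [conjTranspose_eq_transpose_of_trivial] using hA₁.1.eq
  have hcA₁ : (c • A₁).PosSemidef := by
    refine .of_dotProduct_mulVec_nonneg (by simp [Matrix.IsHermitian, hA₁t]) fun x => ?_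
    rw [smul_mulVec, dotProduct_smul, smul_eq_mul]
    exact mul_nonneg hστ.le (hA₁.dotProduct_mulVec_nonneg x)
  have hD : D.PosDef := hB.add_posSemidef hcA₁
  have hBd : IsUnit B.det := hB.det_pos.ne'.isUnit
  have hDd : IsUnit D.det := hD.det_pos.ne'.isUnit
  have hBiB : B⁻¹ * B = 1 := nonsing_inv_mul _ hBd
  have hBBi : B * B⁻¹ = 1 := mul_nonsing_inv _ hBd
  have hGBv : ∀ v : Fin n → ℝ, B⁻¹ *ᵥ (B *ᵥ v) = v := fun v => by
    rw [mulVec_mulVec, hBiB, one_mulVec]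
  have hGsym : (B⁻¹).IsHermitian := hB.inv.isHermitian
  -- the auxiliary vectors
  set ξ := D⁻¹ *ᵥ ((A₁ + A₂) *ᵥ y) with hξdef
  set ψ := D⁻¹ *ᵥ φ with hψdef
  have hξ : D *ᵥ ξ = (A₁ + A₂) *ᵥ y := by
    rw [hξdef, mulVec_mulVec, mul_nonsing_inv _ hDd, one_mulVec]
  have hψ : D *ᵥ ψ = φ := by
    rw [hψdef, mulVec_mulVec, mul_nonsing_inv _ hDd, one_mulVec]
  -- key identity : C *ᵥ y' = (C *ᵥ y - τ • (B *ᵥ ξ)) + τ • (B *ᵥ ψ)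
  have hMM : B * D⁻¹ * (D * B⁻¹ * C) = C := by
    rw [Matrix.mul_assoc D B⁻¹ C, Matrix.mul_assoc B D⁻¹ _, ← Matrix.mul_assoc D⁻¹ D _,
      nonsing_inv_mul _ hDd, Matrix.one_mul, ← Matrix.mul_assoc B B⁻¹ C, hBBi, Matrix.one_mul]
  have h0 : (D * B⁻¹ * C) *ᵥ ((1 / τ) • (y' - y)) = φ - (A₁ + A₂) *ᵥ y :=
    eq_sub_of_add_eq hscheme
  have h2 : C *ᵥ y' - C *ᵥ y = τ • (B *ᵥ ψ) - τ • (B *ᵥ ξ) := by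
    have h1 := congrArg (fun v => τ • ((B * D⁻¹) *ᵥ v)) h0
    simp only [mulVec_mulVec] at h1
    rw [hMM] at h1
    rw [mulVec_smul, smul_smul, mul_one_div_cancel hτ.ne', one_smul, mulVec_sub] at h1
    rw [h1]
    simp only [hψdef, hξdef, mulVec_sub, smul_sub, mulVec_mulVec, Matrix.mul_assoc]
  have hkey : C *ᵥ y' = (C *ᵥ y - τ • (B *ᵥ ξ)) + τ • (B *ᵥ ψ) := by
    rw [sub_eq_iff_eq_add] at h2
    rw [h2]; abel
  -- Claim A : normBinv B (B *ᵥ ψ) ≤ normBinv B φ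
  have claimA : normBinv B (B *ᵥ ψ) ≤ normBinv B φ := by
    apply normBinv_mono
    rw [← hψ]
    have hDψ : D *ᵥ ψ = B *ᵥ ψ + c • (A₁ *ᵥ ψ) := by
      rw [hDdef, add_mulVec, smul_mulVec]
    rw [hGBv ψ]
    have hexp : (D *ᵥ ψ) ⬝ᵥ (B⁻¹ *ᵥ (D *ᵥ ψ))
        = (B *ᵥ ψ) ⬝ᵥ ψ + 2 * c * (ψ ⬝ᵥ (A₁ *ᵥ ψ))
          + c * c * ((A₁ *ᵥ ψ) ⬝ᵥ (B⁻¹ *ᵥ (A₁ *ᵥ ψ))) := by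
      rw [hDψ, mulVec_add, mulVec_smul, hGBv ψ]
      simp only [dotProduct_add, add_dotProduct, dotProduct_smul, smul_dotProduct, smul_eq_mul]
      rw [herm_dot hGsym (B *ᵥ ψ) (A₁ *ᵥ ψ), hGBv ψ]
      rw [dotProduct_comm (A₁ *ᵥ ψ) ψ]
      ring
    rw [hexp]
    have h1 : 0 ≤ ψ ⬝ᵥ (A₁ *ᵥ ψ) := quad_nonneg hA₁ ψ
    have h2' : 0 ≤ (A₁ *ᵥ ψ) ⬝ᵥ (B⁻¹ *ᵥ (A₁ *ᵥ ψ)) := quad_nonneg hB.inv.posSemidef _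
    nlinarith [mul_nonneg hστ.le h1, mul_nonneg (mul_nonneg hστ.le hστ.le) h2']
  -- Claim B : normBinv B (C *ᵥ y - τ • (B *ᵥ ξ)) ≤ normBinv B (C *ᵥ y)
  have claimB : normBinv B (C *ᵥ y - τ • (B *ᵥ ξ)) ≤ normBinv B (C *ᵥ y) := by
    apply normBinv_mono
    -- scalar abbreviations
    set bxx := ξ ⬝ᵥ (B *ᵥ ξ) with hbxx
    set bxy := ξ ⬝ᵥ (B *ᵥ y) with hbxy
    set a1xx := ξ ⬝ᵥ (A₁ *ᵥ ξ) with ha1xx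
    set a1xy := ξ ⬝ᵥ (A₁ *ᵥ y) with ha1xy
    set a1yy := y ⬝ᵥ (A₁ *ᵥ y) with ha1yy
    set a2xy := ξ ⬝ᵥ (A₂ *ᵥ y) with ha2xy
    set a2yy := y ⬝ᵥ (A₂ *ᵥ y) with ha2yy
    have e1 : bxx + c * a1xx = a1xy + a2xy := by
      have := congrArg (fun v => ξ ⬝ᵥ v) hξ
      simpa only [hDdef, add_mulVec, smul_mulVec, dotProduct_add, dotProduct_smul,
        smul_eq_mul] using this
    have e2 : bxy + c * a1xy = a1yy + a2yy := by
      have := congrArg (fun v => y ⬝ᵥ v) hξ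
      simp only [hDdef, add_mulVec, smul_mulVec, dotProduct_add, dotProduct_smul,
        smul_eq_mul] at this
      rwa [symm_dot hB.isHermitian y ξ, symm_dot hA₁.isHermitian y ξ] at this
    have p1 : 0 ≤ a2yy := quad_nonneg hA₂ y
    have p3 : 0 ≤ bxx := quad_nonneg hB.posSemidef ξ
    have p2 : 0 ≤ a1yy - 2 * c * a1xy + c * c * a1xx := by
      have hq := quad_nonneg hA₁ (y - c • ξ)
      have hexp2 : (y - c • ξ) ⬝ᵥ (A₁ *ᵥ (y - c • ξ))
          = a1yy - 2 * c * a1xy + c * c * a1xx := by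
        simp only [mulVec_sub, mulVec_smul, sub_dotProduct, dotProduct_sub, smul_dotProduct,
          dotProduct_smul, smul_eq_mul]
        rw [symm_dot hA₁.isHermitian y ξ]
        ring
      rwa [hexp2] at hq
    have key : τ * bxx ≤ 2 * (ξ ⬝ᵥ (C *ᵥ y)) := by
      have hCxy : ξ ⬝ᵥ (C *ᵥ y) = bxy + c * a2xy := by
        simp only [hCdef, add_mulVec, smul_mulVec, dotProduct_add, dotProduct_smul,
          smul_eq_mul]
        rfl
      rw [hCxy]
      have h2c : τ ≤ 2 * c := by rw [hc]; nlinarith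
      nlinarith [mul_nonneg (by linarith : (0:ℝ) ≤ 2 * c - τ) p3,
        mul_le_mul_of_nonneg_left e1.le (le_of_eq rfl)]
    have hexpB : (C *ᵥ y - τ • (B *ᵥ ξ)) ⬝ᵥ (B⁻¹ *ᵥ (C *ᵥ y - τ • (B *ᵥ ξ)))
        = (C *ᵥ y) ⬝ᵥ (B⁻¹ *ᵥ (C *ᵥ y)) - 2 * τ * (ξ ⬝ᵥ (C *ᵥ y)) + τ * τ * bxx := by
      rw [mulVec_sub, mulVec_smul, hGBv ξ]
      simp only [sub_dotProduct, dotProduct_sub, smul_dotProduct, dotProduct_smul, smul_eq_mul]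
      rw [herm_dot hGsym (B *ᵥ ξ) (C *ᵥ y), hGBv ξ]
      rw [dotProduct_comm (C *ᵥ y) ξ, dotProduct_comm (B *ᵥ ξ) ξ]
      ring
    rw [hexpB]
    nlinarith [mul_le_mul_of_nonneg_left key hτ.le]
  -- assemble
  calc normBinv B (C *ᵥ y')
      = normBinv B ((C *ᵥ y - τ • (B *ᵥ ξ)) + τ • (B *ᵥ ψ)) := by rw [hkey]
    _ ≤ normBinv B (C *ᵥ y - τ • (B *ᵥ ξ)) + normBinv B (τ • (B *ᵥ ψ)) :=
        normBinv_add_le hB _ _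
    _ = normBinv B (C *ᵥ y - τ • (B *ᵥ ξ)) + τ * normBinv B (B *ᵥ ψ) := by
        rw [normBinv_smul B hτ.le]
    _ ≤ normBinv B (C *ᵥ y) + τ * normBinv B φ :=
        add_le_add claimB (mul_le_mul_of_nonneg_left claimA hτ.le)
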